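/- Let Y be the n×n upper-triangular matrix over the polynomial ring ℂ[y_{ij} : 1 ≤ i ≤ j ≤ n] whose (i,j) entry is the indeterminate y_{ij} for i ≤ j and 0 for i > j. For subsets R, S ⊆ [n] with |R| = |S|, the determinant of the submatrix Y_S^R of Y with row indices in R and column indices in S is nonzero if and only if R ≤ S, i.e., for each k the k-th smallest element of R is at most the k-th smallest element of S. -/

import Mathlib

/-- `R ≤ S` for subsets of `[n]`: they have the same size and for each `k`, the
`k`-th smallest element of `R` is at most the `k`-th smallest element of `S`. -/
def FinsetLe (n : ℕ) (R S : Finset (Fin n)) : Prop :=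
  R.card = S.card ∧
    ∀ (k : ℕ) (hR : k < (R.sort (· ≤ ·)).length) (hS : k < (S.sort (· ≤ ·)).length),
      (R.sort (· ≤ ·)).get ⟨k, hR⟩ ≤ (S.sort (· ≤ ·)).get ⟨k, hS⟩

/-- The generic `n × n` upper-triangular matrix `Y`: its `(i, j)` entry is the
indeterminate `y_{ij}` for `i ≤ j` and `0` for `i > j`, over `ℂ`. -/
noncomputable def ytMatrix (n : ℕ) :
    Matrix (Fin n) (Fin n) (MvPolynomial (Fin n × Fin n) ℂ) :=
  fun i j => if i ≤ j then MvPolynomial.X (i, j) else 0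

/-- Pigeonhole: if `r, s` are monotone and `r a ≤ s (σ a)` for a permutation `σ`,
then `r a ≤ s a` for all `a`. -/
lemma perm_le_aux {n k : ℕ} (r s : Fin k → Fin n) (hr : Monotone r) (hs : Monotone s)
    (σ : Equiv.Perm (Fin k)) (h : ∀ a, r a ≤ s (σ a)) : ∀ a, r a ≤ s a := by
  intro a
  obtain ⟨b, hab, hσb⟩ : ∃ b, a ≤ b ∧ σ b ≤ a := by
    by_contra h'
    push_neg at h'
    have hsub : ∀ x ∈ Finset.Ici a, σ x ∈ Finset.Ioi a := by
      intro x hx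
      simp only [Finset.mem_Ici] at hx
      simpa using h' x hx
    have hcard := Finset.card_le_card_of_injOn σ hsub
      (fun x _ y _ hxy => σ.injective hxy)
    rw [Fin.card_Ici, Fin.card_Ioi] at hcard
    have := a.2
    omega
  exact le_trans (hr hab) (le_trans (h b) (hs hσb))

lemma prod_X_eq {σ : Type*} {α : Type*} [DecidableEq σ] (t : Finset α) (p : α → σ) :
    (∏ a ∈ t, (MvPolynomial.X (p a) : MvPolynomial σ ℂ)) =
      MvPolynomial.monomial (∑ a ∈ t, Finsupp.single (p a) 1) (1 : ℂ) := by
  induction t using Finset.cons_induction with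
  | empty => simp [MvPolynomial.monomial_zero']
  | cons a t h ih =>
    rw [Finset.prod_cons, Finset.sum_cons, ih, MvPolynomial.X,
      MvPolynomial.monomial_mul, one_mul]

/-- For `R, S ⊆ [n]` with `|R| = |S| = k`, the minor of `Y` with rows `R` and columns `S`
is nonzero if and only if `R ≤ S`. -/
theorem det_submatrix_ytMatrix_ne_zero_iff (n k : ℕ) (hn : 1 ≤ n)
    (R S : Finset (Fin n)) (hR : R.card = k) (hS : S.card = k) :
    ((ytMatrix n).submatrix (fun a : Fin k => R.orderEmbOfFin hR a)
        (fun b : Fin k => S.orderEmbOfFin hS b)).det ≠ 0 ↔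
      FinsetLe n R S := by
  set r : Fin k → Fin n := fun a => R.orderEmbOfFin hR a with hr_def
  set s : Fin k → Fin n := fun a => S.orderEmbOfFin hS a with hs_def
  have hr_mono : Monotone r := (R.orderEmbOfFin hR).monotone
  have hs_mono : Monotone s := (S.orderEmbOfFin hS).monotone
  have hr_inj : Function.Injective r := (R.orderEmbOfFin hR).injective
  have hs_inj : Function.Injective s := (S.orderEmbOfFin hS).injective
  -- FinsetLe is equivalent to pointwise comparison of r and s
  have hle_iff : FinsetLe n R S ↔ ∀ a : Fin k, r a ≤ s a := by
    constructor
    · rintro ⟨-, h⟩ a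
      have hRl : (a : ℕ) < (R.sort (· ≤ ·)).length := by
        rw [Finset.length_sort, hR]; exact a.2
      have hSl : (a : ℕ) < (S.sort (· ≤ ·)).length := by
        rw [Finset.length_sort, hS]; exact a.2
      have := h a hRl hSl
      simpa [hr_def, hs_def, Finset.orderEmbOfFin_apply, List.get_eq_getElem] using this
    · intro h
      refine ⟨hR.trans hS.symm, fun j hRl hSl => ?_⟩
      have hj : j < k := by rwa [Finset.length_sort, hR] at hRl
      have := h ⟨j, hj⟩
      simpa [hr_def, hs_def, Finset.orderEmbOfFin_apply, List.get_eq_getElem] using this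
  rw [hle_iff]
  set M := (ytMatrix n).submatrix r s with hM_def
  constructor
  · -- det ≠ 0 → ∀ a, r a ≤ s a
    intro hdet
    by_contra h
    apply hdet
    rw [Matrix.det_apply]
    refine Finset.sum_eq_zero fun σ _ => ?_
    -- show the product vanishes
    have : ∃ a, ¬ r (σ a) ≤ s a := by
      by_contra h'
      push_neg at h'
      apply h
      refine perm_le_aux r s hr_mono hs_mono σ.symm fun a => ?_
      have := h' (σ.symm a)
      simpa using this
    obtain ⟨a, ha⟩ := this
    have hzero : M (σ a) a = 0 := by
      simp only [hM_def, Matrix.submatrix_apply, ytMatrix, if_neg ha]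
    have hp : (∏ i : Fin k, M (σ i) i) = 0 :=
      Finset.prod_eq_zero (f := fun i => M (σ i) i) (Finset.mem_univ a) hzero
    rw [hp, smul_zero]
  · -- ∀ a, r a ≤ s a → det ≠ 0
    intro h
    set m : (Fin n × Fin n) →₀ ℕ := ∑ a : Fin k, Finsupp.single (r a, s a) 1 with hm_def
    have hcoeff : MvPolynomial.coeff m M.det = 1 := by
      rw [Matrix.det_apply]
      rw [MvPolynomial.coeff_sum]
      have hterm : ∀ σ : Equiv.Perm (Fin k),
          MvPolynomial.coeff m (Equiv.Perm.sign σ • ∏ a : Fin k, M (σ a) a) =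
            if σ = 1 then 1 else 0 := by
        intro σ
        by_cases hσall : ∀ a, r (σ a) ≤ s a
        · have hprod : (∏ a : Fin k, M (σ a) a) =
              MvPolynomial.monomial (∑ a : Fin k, Finsupp.single (r (σ a), s a) 1) (1 : ℂ) := by
            rw [← prod_X_eq]
            refine Finset.prod_congr rfl fun a _ => ?_
            simp only [hM_def, Matrix.submatrix_apply, ytMatrix, if_pos (hσall a)]
          rw [hprod, MvPolynomial.coeff_smul, MvPolynomial.coeff_monomial]
          by_cases hσ : σ = 1
          · subst hσ
            simp [hm_def]
          · rw [if_neg, if_neg hσ, smul_zero]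
            -- the exponents differ
            intro heq
            apply hσ
            refine Equiv.ext fun a => ?_
            rw [Equiv.Perm.one_apply]
            -- evaluate the finsupps
            have key : ∃ b : Fin k, (r (σ a), s a) = (r b, s b) := by
              have happ : m (r (σ a), s a) ≠ 0 := by
                rw [← heq]
                have : (1 : ℕ) ≤ (∑ b : Fin k, Finsupp.single (r (σ b), s b) 1) (r (σ a), s a) := by
                  rw [Finsupp.finset_sum_apply]
                  refine Finset.single_le_sum (f := fun b =>
                    (Finsupp.single (r (σ b), s b) 1 : (Fin n × Fin n) →₀ ℕ) (r (σ a), s a))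
                    (fun b _ => Nat.zero_le _) (Finset.mem_univ a) |>.trans' ?_
                  simp
                omega
              rw [hm_def, Finsupp.finset_sum_apply] at happ
              obtain ⟨b, -, hb⟩ := Finset.exists_ne_zero_of_sum_ne_zero happ
              refine ⟨b, ?_⟩
              by_contra hne
              exact hb (Finsupp.single_eq_of_ne hne)
            obtain ⟨b, hb⟩ := key
            have h1 : s a = s b := congrArg Prod.snd hb
            have h2 : r (σ a) = r b := congrArg Prod.fst hb
            have : a = b := hs_inj h1
            subst this
            exact hr_inj h2
        · push_neg at hσall
          obtain ⟨a, ha⟩ := hσall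
          have hzero : M (σ a) a = 0 := by
            simp only [hM_def, Matrix.submatrix_apply, ytMatrix, if_neg (not_le.mpr ha)]
          have hp : (∏ i : Fin k, M (σ i) i) = 0 :=
            Finset.prod_eq_zero (f := fun i => M (σ i) i) (Finset.mem_univ a) hzero
          rw [hp, smul_zero, MvPolynomial.coeff_zero]
          rw [if_neg]
          intro hσ
          subst hσ
          exact not_le.mpr ha (h a)
      rw [Finset.sum_congr rfl fun σ _ => hterm σ]
      simp
    intro hdet
    rw [hdet, MvPolynomial.coeff_zero] at hcoeff
    exact one_ne_zero hcoeff.symm
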